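/- arXiv:0712.0214 — 5 statements merged into one kernel-verified Lean document; each statement's English description precedes it below -/
import Mathlib

section
/- Suppose u_1,...,u_n ∈ ℝ^m satisfy ∑_{k=1}^n |⟨u_k, x⟩|^p = ⟨x,x⟩^{p/2} for all x ∈ ℝ^m, and suppose there exist real numbers ω_1,...,ω_n, not all zero, with ∑_{k=1}^n ω_k |⟨u_k, x⟩|^p = 0 for all x. Then there exist vectors v_1,...,v_{n-1} ∈ ℝ^m with ∑_{k=1}^{n-1} |⟨v_k, x⟩|^p = ⟨x,x⟩^{p/2} for all x ∈ ℝ^m. -/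
/-- A linear dependence among the functions `|⟨u k,·⟩|^p` allows an isometric-embedding
frame of length `n` to be shortened to one of length `n-1`. -/
theorem stmt1 (m n p : ℕ) (hm : 2 ≤ m) (hn : 1 ≤ n) (hp : Even p) (hp0 : 0 < p)
    (u : Fin n → Fin m → ℝ)
    (hframe : ∀ x : Fin m → ℝ,
      ∑ k, |∑ i, u k i * x i| ^ p = (∑ i, x i ^ 2) ^ (p / 2))
    (ω : Fin n → ℝ) (hω : ω ≠ 0)
    (hdep : ∀ x : Fin m → ℝ, ∑ k, ω k * |∑ i, u k i * x i| ^ p = 0) :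
    ∃ v : Fin (n - 1) → Fin m → ℝ,
      ∀ x : Fin m → ℝ,
        ∑ k, |∑ i, v k i * x i| ^ p = (∑ i, x i ^ 2) ^ (p / 2) := by
  obtain ⟨n', rfl⟩ : ∃ n', n = n' + 1 := ⟨n - 1, (Nat.succ_pred_eq_of_pos hn).symm⟩
  -- get a dependence with a positive coefficient
  obtain ⟨w, hwdep, k1, hk1⟩ :
      ∃ w : Fin (n' + 1) → ℝ,
        (∀ x : Fin m → ℝ, ∑ k, w k * |∑ i, u k i * x i| ^ p = 0) ∧ ∃ k, 0 < w k := by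
    obtain ⟨k, hk⟩ := Function.ne_iff.mp hω
    rcases lt_or_gt_of_ne hk with h | h
    · refine ⟨-ω, fun x => ?_, k, by simpa using h⟩
      have := hdep x
      simp only [Pi.neg_apply, neg_mul]
      rw [Finset.sum_neg_distrib]
      simpa using this
    · exact ⟨ω, hdep, k, h⟩
  -- pick the index with maximal coefficient
  obtain ⟨k0, hk0⟩ := Finite.exists_max w
  have hw0 : 0 < w k0 := lt_of_lt_of_le hk1 (hk0 k1)
  set c : Fin (n' + 1) → ℝ := fun k => 1 - w k / w k0 with hc
  have hcnn : ∀ k, 0 ≤ c k := by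
    intro k
    have : w k / w k0 ≤ 1 := (div_le_one hw0).mpr (hk0 k)
    simp [hc]; linarith
  have hck0 : c k0 = 0 := by simp [hc, div_self hw0.ne']
  have hcsum : ∀ x : Fin m → ℝ,
      ∑ k, c k * |∑ i, u k i * x i| ^ p = (∑ i, x i ^ 2) ^ (p / 2) := by
    intro x
    have h1 := hframe x
    have h2 := hwdep x
    have h3 : ∑ k, (w k / w k0) * |∑ i, u k i * x i| ^ p = 0 := by
      have : ∑ k, (w k / w k0) * |∑ i, u k i * x i| ^ p
          = (w k0)⁻¹ * ∑ k, w k * |∑ i, u k i * x i| ^ p := by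
        rw [Finset.mul_sum]; congr 1; ext k; ring
      rw [this, h2, mul_zero]
    calc ∑ k, c k * |∑ i, u k i * x i| ^ p
        = ∑ k, (|∑ i, u k i * x i| ^ p - (w k / w k0) * |∑ i, u k i * x i| ^ p) := by
          congr 1; ext k; simp [hc]; ring
      _ = (∑ i, x i ^ 2) ^ (p / 2) := by
          rw [Finset.sum_sub_distrib, h1, h3, sub_zero]
  refine ⟨fun j i => (c (k0.succAbove j)) ^ ((p : ℝ)⁻¹) * u (k0.succAbove j) i, fun x => ?_⟩
  have key : ∀ j : Fin n',
      |∑ i, (c (k0.succAbove j)) ^ ((p : ℝ)⁻¹) * u (k0.succAbove j) i * x i| ^ p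
        = c (k0.succAbove j) * |∑ i, u (k0.succAbove j) i * x i| ^ p := by
    intro j
    set a := c (k0.succAbove j)
    have ha : 0 ≤ a := hcnn _
    have : ∑ i, a ^ ((p : ℝ)⁻¹) * u (k0.succAbove j) i * x i
        = a ^ ((p : ℝ)⁻¹) * ∑ i, u (k0.succAbove j) i * x i := by
      rw [Finset.mul_sum]; congr 1; ext i; ring
    rw [this, abs_mul, mul_pow, abs_of_nonneg (Real.rpow_nonneg ha _),
      ← Real.rpow_natCast (a ^ ((p : ℝ)⁻¹)) p, ← Real.rpow_mul ha,
      inv_mul_cancel₀ (by exact_mod_cast hp0.ne'), Real.rpow_one]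
  show ∑ j : Fin n', |∑ i, (c (k0.succAbove j)) ^ ((p : ℝ)⁻¹) * u (k0.succAbove j) i * x i| ^ p
      = (∑ i, x i ^ 2) ^ (p / 2)
  rw [Finset.sum_congr rfl fun j _ => key j]
  have := Fin.sum_univ_succAbove
    (fun k => c k * |∑ i, u k i * x i| ^ p) k0
  rw [hcsum x] at this
  rw [hck0, zero_mul, zero_add] at this
  exact this.symm
end

section
/- If n is the minimal number such that there exists an isometric embedding of ℓ₂^m into ℓ_p^n with frame (u_k)_{k=1}^n (that is, ∑_{k=1}^n |⟨u_k,x⟩|^p = ⟨x,x⟩^{p/2} for all x ∈ ℝ^m, and no such identity holds with n−1 vectors), then the functions x ↦ |⟨u_k,x⟩|^p, k = 1,...,n, are linearly independent in the space of real-valued functions on ℝ^m. -/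
/-- If `n` is minimal such that a frame `(u k)` of an isometric embedding
`ℓ₂^m → ℓ_p^n` exists, then the functions `x ↦ |⟨u k, x⟩|^p` are linearly independent. -/
theorem stmt2 (m n p : ℕ) (hm : 2 ≤ m) (hp : Even p) (hp0 : 0 < p)
    (u : Fin n → Fin m → ℝ)
    (hframe : ∀ x : Fin m → ℝ,
      ∑ k, |∑ i, u k i * x i| ^ p = (∑ i, x i ^ 2) ^ (p / 2))
    (hmin : ¬ ∃ v : Fin (n - 1) → Fin m → ℝ,
      ∀ x : Fin m → ℝ,
        ∑ k, |∑ i, v k i * x i| ^ p = (∑ i, x i ^ 2) ^ (p / 2)) :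
    LinearIndependent ℝ
      (fun k : Fin n => fun x : Fin m → ℝ => |∑ i, u k i * x i| ^ p) := by
  by_contra hli
  rw [Fintype.not_linearIndependent_iff] at hli
  obtain ⟨g, hg, i0, hi0⟩ := hli
  have hgx : ∀ x : Fin m → ℝ, ∑ k, g k * |∑ i, u k i * x i| ^ p = 0 := by
    intro x
    have := congrFun hg x
    simpa [Finset.sum_apply] using this
  set c : Fin n → ℝ := if 0 < g i0 then g else fun k => -g k with hc
  have hcx : ∀ x : Fin m → ℝ, ∑ k, c k * |∑ i, u k i * x i| ^ p = 0 := by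
    intro x
    rw [hc]
    split
    · exact hgx x
    · have := hgx x
      simp only [neg_mul, Finset.sum_neg_distrib, neg_eq_zero]
      exact this
  have hci0 : 0 < c i0 := by
    rw [hc]; split
    · assumption
    · next h => exact neg_pos.mpr (lt_of_le_of_ne (not_lt.mp h) hi0)
  obtain ⟨k0, -, hk0⟩ := Finset.exists_max_image Finset.univ c ⟨i0, Finset.mem_univ i0⟩
  have hM : 0 < c k0 := lt_of_lt_of_le hci0 (hk0 i0 (Finset.mem_univ i0))
  obtain ⟨n', rfl⟩ := Nat.exists_eq_succ_of_ne_zero k0.pos.ne'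
  rw [show n' + 1 - 1 = n' from rfl] at hmin
  apply hmin
  have ha : ∀ k, (0:ℝ) ≤ 1 - c k / c k0 := by
    intro k
    rw [sub_nonneg, div_le_one hM]
    exact hk0 k (Finset.mem_univ k)
  refine ⟨fun j i => (1 - c (k0.succAbove j) / c k0) ^ ((p:ℝ)⁻¹) * u (k0.succAbove j) i, ?_⟩
  intro x
  have hterm : ∀ j : Fin n',
      |∑ i, ((1 - c (k0.succAbove j) / c k0) ^ ((p:ℝ)⁻¹) * u (k0.succAbove j) i) * x i| ^ p
        = (1 - c (k0.succAbove j) / c k0) * |∑ i, u (k0.succAbove j) i * x i| ^ p := by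
    intro j
    have h1 : ∑ i, ((1 - c (k0.succAbove j) / c k0) ^ ((p:ℝ)⁻¹) * u (k0.succAbove j) i) * x i
        = (1 - c (k0.succAbove j) / c k0) ^ ((p:ℝ)⁻¹) * ∑ i, u (k0.succAbove j) i * x i := by
      rw [Finset.mul_sum]
      exact Finset.sum_congr rfl fun i _ => by ring
    rw [h1, abs_mul, abs_of_nonneg (Real.rpow_nonneg (ha _) _), mul_pow,
      ← Real.rpow_natCast ((1 - c (k0.succAbove j) / c k0) ^ ((p:ℝ)⁻¹)) p,
      ← Real.rpow_mul (ha _), inv_mul_cancel₀ (by exact_mod_cast hp0.ne'), Real.rpow_one]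
  calc ∑ j, |∑ i, ((1 - c (k0.succAbove j) / c k0) ^ ((p:ℝ)⁻¹) * u (k0.succAbove j) i) * x i| ^ p
      = ∑ j, (1 - c (k0.succAbove j) / c k0) * |∑ i, u (k0.succAbove j) i * x i| ^ p :=
        Finset.sum_congr rfl fun j _ => hterm j
    _ = ∑ k, (1 - c k / c k0) * |∑ i, u k i * x i| ^ p := by
        rw [Fin.sum_univ_succAbove (fun k => (1 - c k / c k0) * |∑ i, u k i * x i| ^ p) k0,
          div_self hM.ne', sub_self, zero_mul, zero_add]
    _ = ∑ k, |∑ i, u k i * x i| ^ p - (c k0)⁻¹ * ∑ k, c k * |∑ i, u k i * x i| ^ p := by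
        rw [Finset.mul_sum, ← Finset.sum_sub_distrib]
        exact Finset.sum_congr rfl fun k _ => by ring
    _ = (∑ i, x i ^ 2) ^ (p / 2) := by rw [hcx x, mul_zero, sub_zero, hframe x]
end

section
/- Suppose u_1,...,u_n ∈ ℝ^m satisfy ∑_{k=1}^n ⟨u_k,x⟩^p = ⟨x,x⟩^{p/2} for all x ∈ ℝ^m (p even), let μ_1,...,μ_m > 0, and let a_1,...,a_n ≥ 0 be real numbers with a_n = 0 such that (∑_{i=1}^m μ_i x_i²)^{p/2} = ∑_{k=1}^n a_k ⟨u_k,x⟩^p for all x. Then there exist vectors v_1,...,v_{n-1} ∈ ℝ^m with ∑_{k=1}^{n-1} ⟨v_k,z⟩^p = ⟨z,z⟩^{p/2} for all z ∈ ℝ^m. -/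
/-- If a frame identity holds and `(∑ μ_i x_i²)^(p/2) = ∑ a_k ⟨u_k,x⟩^p` with all
`a_k ≥ 0`, `μ_i > 0` and `a_n = 0`, then a frame with `n-1` vectors exists. -/
theorem stmt6 (m n p : ℕ) (hm : 2 ≤ m) (hn : 1 ≤ n) (hp : Even p) (hp0 : 0 < p)
    (u : Fin n → Fin m → ℝ)
    (hframe : ∀ x : Fin m → ℝ,
      ∑ k, (∑ i, u k i * x i) ^ p = (∑ i, x i ^ 2) ^ (p / 2))
    (μ : Fin m → ℝ) (hμ : ∀ i, 0 < μ i)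
    (a : Fin n → ℝ) (ha : ∀ k, 0 ≤ a k) (halast : a ⟨n - 1, by omega⟩ = 0)
    (hid : ∀ x : Fin m → ℝ,
      (∑ i, μ i * x i ^ 2) ^ (p / 2) = ∑ k, a k * (∑ i, u k i * x i) ^ p) :
    ∃ v : Fin (n - 1) → Fin m → ℝ,
      ∀ z : Fin m → ℝ,
        ∑ k, (∑ i, v k i * z i) ^ p = (∑ i, z i ^ 2) ^ (p / 2) := by
  refine ⟨fun k i => (a ⟨k, by omega⟩) ^ ((p : ℝ)⁻¹) *
      (u ⟨k, by omega⟩ i / Real.sqrt (μ i)), fun z => ?_⟩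
  set x : Fin m → ℝ := fun i => z i / Real.sqrt (μ i) with hx
  have hs : ∀ i, Real.sqrt (μ i) ≠ 0 := fun i =>
    (Real.sqrt_pos.mpr (hμ i)).ne'
  have hsum : ∑ i, μ i * x i ^ 2 = ∑ i, z i ^ 2 := by
    refine Finset.sum_congr rfl fun i _ => ?_
    have h1 : Real.sqrt (μ i) ^ 2 = μ i := Real.sq_sqrt (hμ i).le
    simp only [hx]
    rw [div_pow, h1, mul_comm, div_mul_cancel₀ _ (hμ i).ne']
  have key := hid x
  rw [hsum] at key
  rw [key]
  -- term computation
  have hpow : ∀ j : Fin n, ((a j) ^ ((p : ℝ)⁻¹)) ^ p = a j := by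
    intro j
    rw [← Real.rpow_natCast ((a j) ^ ((p : ℝ)⁻¹)) p, ← Real.rpow_mul (ha j),
      inv_mul_cancel₀ (by exact_mod_cast hp0.ne' : (p : ℝ) ≠ 0), Real.rpow_one]
  have hterm : ∀ h : n - 1 < n, ∀ k : Fin (n - 1),
      (∑ i, ((a ⟨(k : ℕ), by omega⟩) ^ ((p : ℝ)⁻¹) *
        (u ⟨(k : ℕ), by omega⟩ i / Real.sqrt (μ i))) * z i) ^ p
      = a ⟨(k : ℕ), by omega⟩ * (∑ i, u ⟨(k : ℕ), by omega⟩ i * x i) ^ p := by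
    intro h k
    have : ∑ i, ((a ⟨(k : ℕ), by omega⟩) ^ ((p : ℝ)⁻¹) *
        (u ⟨(k : ℕ), by omega⟩ i / Real.sqrt (μ i))) * z i
        = (a ⟨(k : ℕ), by omega⟩) ^ ((p : ℝ)⁻¹) *
          ∑ i, u ⟨(k : ℕ), by omega⟩ i * x i := by
      rw [Finset.mul_sum]
      refine Finset.sum_congr rfl fun i _ => ?_
      simp only [hx]
      ring
    rw [this, mul_pow, hpow]
  -- reindex
  have hnn : n - 1 < n := by omega
  set g : ℕ → ℝ := fun k =>
    if h : k < n then a ⟨k, h⟩ * (∑ i, u ⟨k, h⟩ i * x i) ^ p else 0 with hg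
  have hR : ∑ k : Fin n, a k * (∑ i, u k i * x i) ^ p = ∑ k ∈ Finset.range n, g k := by
    rw [← Fin.sum_univ_eq_sum_range]
    refine Finset.sum_congr rfl fun k _ => ?_
    simp [hg, k.isLt]
  have hL : ∑ k : Fin (n - 1),
      (∑ i, ((a ⟨(k : ℕ), by omega⟩) ^ ((p : ℝ)⁻¹) *
        (u ⟨(k : ℕ), by omega⟩ i / Real.sqrt (μ i))) * z i) ^ p
      = ∑ k ∈ Finset.range (n - 1), g k := by
    rw [← Fin.sum_univ_eq_sum_range]
    refine Finset.sum_congr rfl fun k _ => ?_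
    have hk : (k : ℕ) < n := by omega
    rw [hterm hnn k]
    simp [hg, hk]
  rw [hL, hR]
  have : n = (n - 1) + 1 := by omega
  rw [this, Finset.sum_range_succ]
  have hlast : g (n - 1) = 0 := by
    simp [hg, hnn, halast]
  rw [hlast, add_zero]
  simp
end

section
/- Let m ≥ 2 and let p be an even positive integer. If N denotes the minimal n such that there exist vectors u_1,...,u_n ∈ ℝ^m with ∑_{k=1}^n ⟨u_k,x⟩^p = ⟨x,x⟩^{p/2} for all x ∈ ℝ^m, then N ≤ C(m+p−1, p) − 1, i.e. N is strictly less than the dimension of the space of homogeneous polynomials of degree p in m variables. -/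
open Finset

noncomputable section Stmt7Aux
open scoped Classical

variable (m p : ℕ)

/-- the p-th power of a linear form, as a function. -/
def stmt7F (u : Fin m → ℝ) : (Fin m → ℝ) → ℝ := fun x => (∑ i, u i * x i) ^ p

/-- monomial functions indexed by multisets -/
def stmt7M (s : Sym (Fin m) p) : (Fin m → ℝ) → ℝ := fun x => ((s : Multiset (Fin m)).map x).prod

/-- the span of monomials of degree p -/
def stmt7W : Submodule ℝ ((Fin m → ℝ) → ℝ) := Submodule.span ℝ (Set.range (stmt7M m p))

instance : FiniteDimensional ℝ (stmt7W m p) :=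
  FiniteDimensional.span_of_finite ℝ (Set.finite_range _)

lemma stmt7F_mem (u : Fin m → ℝ) : stmt7F m p u ∈ stmt7W m p := by
  have hexp : stmt7F m p u = ∑ g ∈ Fintype.piFinset (fun _ : Fin p => (univ : Finset (Fin m))),
      (∏ j, u (g j)) • (fun x : Fin m → ℝ => ∏ j, x (g j)) := by
    funext x
    have : (∑ i, u i * x i) ^ p = ∏ _j : Fin p, (∑ i, u i * x i) := by
      simp [Finset.prod_const]
    rw [stmt7F, this, Finset.prod_univ_sum]
    simp [Finset.prod_mul_distrib]
  rw [hexp]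
  refine Submodule.sum_mem _ (fun g _ => Submodule.smul_mem _ _ (Submodule.subset_span ?_))
  refine ⟨⟨Multiset.map g Finset.univ.val, by simp⟩, ?_⟩
  funext x
  show (Multiset.map x (Multiset.map g Finset.univ.val)).prod = _
  rw [Multiset.map_map, Finset.prod_eq_multiset_prod]
  rfl

lemma stmt7_finrank_le : Module.finrank ℝ (stmt7W m p) ≤ (m + p - 1).choose p := by
  have h1 : Set.range (stmt7M m p) = ((Finset.univ.image (stmt7M m p) : Finset _) : Set _) := by
    simp
  have h2 : Module.finrank ℝ (stmt7W m p) ≤ (Finset.univ.image (stmt7M m p)).card := by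
    rw [stmt7W, h1]
    exact finrank_span_finset_le_card _
  refine h2.trans ?_
  calc (Finset.univ.image (stmt7M m p)).card ≤ (univ : Finset (Sym (Fin m) p)).card :=
        Finset.card_image_le
    _ = Fintype.card (Sym (Fin m) p) := rfl
    _ = (m + p - 1).choose p := by
        rw [Sym.card_sym_eq_multichoose, Nat.multichoose_eq, Fintype.card_fin]

lemma stmt7F_smul (c : ℝ) (u : Fin m → ℝ) (x : Fin m → ℝ) :
    stmt7F m p (c • u) x = c ^ p * stmt7F m p u x := by
  simp only [stmt7F, Pi.smul_apply, smul_eq_mul]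
  rw [← mul_pow, Finset.mul_sum]
  congr 1
  exact Finset.sum_congr rfl (fun i _ => by ring)

lemma stmt7F_nonneg (hp : Even p) (u x : Fin m → ℝ) : 0 ≤ stmt7F m p u x :=
  hp.pow_nonneg _

lemma stmt7F_self_pos {u : Fin m → ℝ} (hu : u ≠ 0) : 0 < stmt7F m p u u := by
  have h1 : (0:ℝ) < ∑ i, u i * u i := by
    obtain ⟨i, hi⟩ : ∃ i, u i ≠ 0 := by
      by_contra h; push_neg at h; exact hu (funext h)
    have hii : (0:ℝ) < u i * u i := mul_self_pos.mpr hi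
    have hle : u i * u i ≤ ∑ j, u j * u j :=
      Finset.single_le_sum (fun j _ => mul_self_nonneg (u j)) (Finset.mem_univ i)
    linarith
  exact pow_pos h1 p

lemma stmt7F_zero (hp0 : 0 < p) (x : Fin m → ℝ) : stmt7F m p 0 x = 0 := by
  simp [stmt7F, zero_pow hp0.ne']

lemma stmt7_rpow_pow {μ : ℝ} (hμ : 0 ≤ μ) (hp0 : 0 < p) : (μ ^ ((p:ℝ)⁻¹)) ^ p = μ := by
  rw [← Real.rpow_natCast (μ ^ ((p:ℝ)⁻¹)) p, ← Real.rpow_mul hμ,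
    inv_mul_cancel₀ (by exact_mod_cast hp0.ne'), Real.rpow_one]

lemma stmt7F_continuous : Continuous fun u : Fin m → ℝ => stmt7F m p u := by
  apply continuous_pi
  intro x
  exact (continuous_finset_sum _ fun i _ => (continuous_apply i).mul continuous_const).pow p

/-- converting a nonnegative-coefficient representation to a pure power representation -/
lemma stmt7_scale (hp0 : 0 < p) {n : ℕ} (q : (Fin m → ℝ) → ℝ) (μ : Fin n → ℝ)
    (hμ : ∀ k, 0 ≤ μ k) (y : Fin n → Fin m → ℝ)
    (h : ∀ x, q x = ∑ k, μ k * stmt7F m p (y k) x) :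
    ∀ x, q x = ∑ k, stmt7F m p ((μ k ^ ((p:ℝ)⁻¹)) • y k) x := by
  intro x
  rw [h x]
  refine Finset.sum_congr rfl fun k _ => ?_
  rw [stmt7F_smul, stmt7_rpow_pow p (hμ k) hp0]

/-- dropping a zero vector from a representation -/
lemma stmt7_drop (hp0 : 0 < p) {n : ℕ} (q : (Fin m → ℝ) → ℝ) (w : Fin (n+1) → Fin m → ℝ)
    (j : Fin (n+1)) (hw : w j = 0) (h : ∀ x, q x = ∑ k, stmt7F m p (w k) x) :
    ∀ x, q x = ∑ k : Fin n, stmt7F m p (w (j.succAbove k)) x := by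
  intro x
  rw [h x, Fin.sum_univ_succAbove (fun k => stmt7F m p (w k) x) j, hw,
    stmt7F_zero m p hp0, zero_add]

lemma stmt7_reduce (hm : 2 ≤ m) (hp : Even p) (hp0 : 0 < p) (q : (Fin m → ℝ) → ℝ) :
    ∀ n : ℕ, (∃ u : Fin n → Fin m → ℝ, ∀ x, q x = ∑ k, stmt7F m p (u k) x) →
    ∃ n', n' ≤ (m + p - 1).choose p - 1 ∧
      ∃ u' : Fin n' → Fin m → ℝ, ∀ x, q x = ∑ k, stmt7F m p (u' k) x := by
  set D := (m + p - 1).choose p with hD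
  have hD2 : 2 ≤ D := by
    have h1 : (p+1).choose p ≤ D := Nat.choose_le_choose p (by omega)
    rw [Nat.choose_succ_self_right] at h1
    omega
  intro n
  induction n using Nat.strong_induction_on with
  | _ n IH =>
    rintro ⟨u, hu⟩
    by_cases hn : n ≤ D - 1
    · exact ⟨n, hn, u, hu⟩
    have hnD : D ≤ n := by omega
    obtain ⟨nn, rfl⟩ : ∃ nn, n = nn + 1 := ⟨n - 1, by omega⟩
    set v : Fin (nn+1) → stmt7W m p :=
      fun k => ⟨stmt7F m p (u k), stmt7F_mem m p (u k)⟩ with hv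
    -- it suffices to find an (nn+1)-representation with one vector equal to zero
    suffices hsuff : ∃ w : Fin (nn+1) → Fin m → ℝ, (∃ j, w j = 0) ∧
        ∀ x, q x = ∑ k, stmt7F m p (w k) x by
      obtain ⟨w, ⟨j, hj⟩, hw⟩ := hsuff
      exact IH nn (by omega) ⟨_, stmt7_drop m p hp0 q w j hj hw⟩
    by_cases hdep : LinearIndependent ℝ v
    · -- independent case: nn + 1 = D, use the path argument
      have hcard : nn + 1 ≤ Module.finrank ℝ (stmt7W m p) := by
        have := hdep.fintype_card_le_finrank
        simpa using this
      have hfr : Module.finrank ℝ (stmt7W m p) = nn + 1 :=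
        le_antisymm (by have := stmt7_finrank_le m p; omega) hcard
      have hDn : nn + 1 = D := by have := stmt7_finrank_le m p; omega
      -- basis
      let B : Module.Basis (Fin (nn+1)) ℝ (stmt7W m p) :=
        basisOfLinearIndependentOfCardEqFinrank hdep (by simpa using hfr.symm)
      have hB : ⇑B = v := coe_basisOfLinearIndependentOfCardEqFinrank hdep _
      have hrepr_v : ∀ k l, B.repr (v k) l = if k = l then 1 else 0 := by
        intro k l
        rw [← hB, B.repr_self k, Finsupp.single_apply]
      -- indices
      have hnn1 : 1 ≤ nn := by omega
      set k₀ : Fin (nn+1) := ⟨0, by omega⟩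
      set k₁ : Fin (nn+1) := ⟨1, by omega⟩
      have hk01 : k₁ ≠ k₀ := by
        simp only [k₀, k₁, Fin.mk.injEq, Ne]
        omega
      have hune : ∀ k, u k ≠ 0 := by
        intro k hk
        refine hdep.ne_zero k (Subtype.ext ?_)
        show stmt7F m p (u k) = 0
        funext x
        rw [hk, stmt7F_zero m p hp0]
        rfl
      -- path
      have hrank : 1 < Module.rank ℝ (Fin m → ℝ) := by
        rw [rank_fun']
        rw [Fintype.card_fin]
        exact_mod_cast (by omega : 1 < m)
      have hpc : IsPathConnected ({0}ᶜ : Set (Fin m → ℝ)) :=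
        isPathConnected_compl_singleton_of_one_lt_rank hrank 0
      obtain ⟨γ, hγ⟩ : JoinedIn ({0}ᶜ : Set (Fin m → ℝ)) (u k₀) (u k₁) :=
        hpc.joinedIn _ (by simp [hune k₀]) _ (by simp [hune k₁])
      have hγe : ∀ t : ℝ, γ.extend t ≠ 0 := by
        intro t
        have h1 : γ.extend t ∈ Set.range γ := by
          rw [← Path.extend_range]; exact Set.mem_range_self t
        obtain ⟨s, hs⟩ := h1
        rw [← hs]
        exact hγ s
      -- the W-valued map and coordinates
      set Fv : (Fin m → ℝ) → stmt7W m p :=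
        fun w => ⟨stmt7F m p w, stmt7F_mem m p w⟩ with hFv
      have hFvcont : Continuous Fv := Continuous.subtype_mk (stmt7F_continuous m p) _
      set a : ℝ → Fin (nn+1) → ℝ := fun t l => B.repr (Fv (γ.extend t)) l with ha
      have hacont : ∀ l, Continuous fun t => a t l := by
        intro l
        have h1 : Continuous (B.coord l) := (B.coord l).continuous_of_finiteDimensional
        exact h1.comp (hFvcont.comp γ.continuous_extend)
      have ha0 : ∀ l, a 0 l = if k₀ = l then 1 else 0 := by
        intro l
        show B.repr (Fv (γ.extend 0)) l = _
        rw [Path.extend_zero]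
        exact hrepr_v k₀ l
      have ha1 : ∀ l, a 1 l = if k₁ = l then 1 else 0 := by
        intro l
        show B.repr (Fv (γ.extend 1)) l = _
        rw [Path.extend_one]
        exact hrepr_v k₁ l
      set A : ℝ → ℝ := fun t => a t k₀ with hA
      set g : Fin (nn+1) → ℝ → ℝ := fun k t => A t - a t k with hg
      set T : Set ℝ := {t | t ∈ Set.Icc (0:ℝ) 1 ∧ (A t ≤ 0 ∨ ∃ k, k ≠ k₀ ∧ g k t ≤ 0)}
        with hT
      have hclosed : IsClosed T := by
        have h1 : T = Set.Icc 0 1 ∩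
            ({t | A t ≤ 0} ∪ ⋃ k : Fin (nn+1), {t | k ≠ k₀ ∧ g k t ≤ 0}) := by
          ext t
          constructor
          · rintro ⟨h1, h2⟩
            refine ⟨h1, ?_⟩
            rcases h2 with h | ⟨k, hk⟩
            · exact Or.inl h
            · exact Or.inr (Set.mem_iUnion.mpr ⟨k, hk⟩)
          · rintro ⟨h1, h2⟩
            refine ⟨h1, ?_⟩
            rcases h2 with h | h
            · exact Or.inl h
            · obtain ⟨k, hk⟩ := Set.mem_iUnion.mp h
              exact Or.inr ⟨k, hk⟩
        rw [h1]
        refine isClosed_Icc.inter (IsClosed.union ?_ (isClosed_iUnion_of_finite ?_))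
        · exact isClosed_le (hacont k₀) continuous_const
        · intro k
          by_cases hk : k = k₀
          · simp [hk]
          · have h2 : {t : ℝ | k ≠ k₀ ∧ g k t ≤ 0} = {t | g k t ≤ 0} := by
              ext t; simp [hk]
            rw [h2]
            exact isClosed_le ((hacont k₀).sub (hacont k)) continuous_const
      have hTne : T.Nonempty := by
        refine ⟨1, ⟨le_of_lt one_pos, le_refl 1⟩, Or.inl ?_⟩
        show a 1 k₀ ≤ 0
        rw [ha1 k₀, if_neg hk01]
      have hTbdd : BddBelow T := ⟨0, fun t ht => ht.1.1⟩
      set ts : ℝ := sInf T with hts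
      have htsT : ts ∈ T := hclosed.csInf_mem hTne hTbdd
      have hts01 : ts ∈ Set.Icc (0:ℝ) 1 := htsT.1
      have hposbefore : ∀ t, 0 ≤ t → t < ts → 0 < A t ∧ ∀ k, k ≠ k₀ → 0 < g k t := by
        intro t h0 hlt
        have htT : t ∉ T := fun h => absurd (csInf_le hTbdd h) (not_le.mpr hlt)
        have hIcc : t ∈ Set.Icc (0:ℝ) 1 := ⟨h0, le_trans hlt.le hts01.2⟩
        by_contra hcon
        apply htT
        refine ⟨hIcc, ?_⟩
        push_neg at hcon
        rcases le_or_gt (A t) 0 with hA' | hA'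
        · exact Or.inl hA'
        · obtain ⟨k, hk, hgk⟩ := hcon hA'
          exact Or.inr ⟨k, hk, hgk⟩
      have hA0val : A 0 = 1 := by
        have h1 := ha0 k₀
        rw [if_pos rfl] at h1
        exact h1
      have hgk0val : ∀ k, k ≠ k₀ → g k 0 = 1 := by
        intro k hk
        have h1 := ha0 k
        rw [if_neg (Ne.symm hk)] at h1
        show A 0 - a 0 k = 1
        rw [hA0val, h1, sub_zero]
      have hts0 : 0 < ts := by
        rcases lt_or_eq_of_le hts01.1 with h | h
        · exact h
        · exfalso
          rcases htsT.2 with h1 | ⟨k, hk, h1⟩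
          · rw [← h, hA0val] at h1; linarith
          · rw [← h, hgk0val k hk] at h1; linarith
      have hlim : ∀ f : ℝ → ℝ, Continuous f → (∀ t, 0 ≤ t → t < ts → 0 < f t) →
          0 ≤ f ts := by
        intro f hf hfpos
        have hmemcl : ts ∈ closure (Set.Ico (0:ℝ) ts) := by
          rw [closure_Ico (ne_of_lt hts0)]
          exact ⟨le_of_lt hts0, le_refl _⟩
        have hnb : Filter.NeBot (nhdsWithin ts (Set.Ico 0 ts)) :=
          mem_closure_iff_nhdsWithin_neBot.mp hmemcl
        haveI := hnb
        have htend : Filter.Tendsto f (nhdsWithin ts (Set.Ico 0 ts)) (nhds (f ts)) :=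
          (hf.tendsto ts).mono_left nhdsWithin_le_nhds
        exact ge_of_tendsto htend
          (eventually_nhdsWithin_of_forall fun t ht => (hfpos t ht.1 ht.2).le)
      have hAge : 0 ≤ A ts := hlim A (hacont k₀) fun t h0 hlt => (hposbefore t h0 hlt).1
      have hgge : ∀ k, k ≠ k₀ → 0 ≤ g k ts := fun k hk =>
        hlim (g k) ((hacont k₀).sub (hacont k))
          (fun t h0 hlt => (hposbefore t h0 hlt).2 k hk)
      by_cases hA0 : A ts ≤ 0
      · -- contradiction case: all coordinates of Fv (γ.extend ts) are ≤ 0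
        exfalso
        have hAeq : A ts = 0 := le_antisymm hA0 hAge
        have hale : ∀ l, a ts l ≤ 0 := by
          intro l
          by_cases hl : l = k₀
          · rw [hl]; exact hA0
          · have := hgge l hl
            simp only [hg] at this
            rw [hAeq] at this
            linarith
        have hsumrepr := B.sum_repr (Fv (γ.extend ts))
        have happ := congrArg
          (fun z : stmt7W m p => (z : (Fin m → ℝ) → ℝ) (γ.extend ts)) hsumrepr
        simp only [AddSubmonoidClass.coe_finset_sum, Finset.sum_apply,
          SetLike.val_smul, Pi.smul_apply, smul_eq_mul] at happ
        have hlhs : ∑ l, B.repr (Fv (γ.extend ts)) l * ((B l : (Fin m → ℝ) → ℝ) (γ.extend ts))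
            ≤ 0 := by
          refine Finset.sum_nonpos fun l _ => ?_
          have h1 : (B l : (Fin m → ℝ) → ℝ) (γ.extend ts) = stmt7F m p (u l) (γ.extend ts) := by
            rw [hB]
          rw [h1]
          calc B.repr (Fv (γ.extend ts)) l * stmt7F m p (u l) (γ.extend ts)
              ≤ 0 * stmt7F m p (u l) (γ.extend ts) :=
                mul_le_mul_of_nonneg_right (hale l) (stmt7F_nonneg m p hp _ _)
            _ = 0 := zero_mul _
        rw [happ] at hlhs
        have hrhs : 0 < (Fv (γ.extend ts) : (Fin m → ℝ) → ℝ) (γ.extend ts) :=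
          stmt7F_self_pos m p (hγe ts)
        linarith
      · -- main case: A ts > 0 and some coefficient vanishes
        push_neg at hA0
        obtain ⟨j, hjne, hgj0⟩ : ∃ j, j ≠ k₀ ∧ g j ts = 0 := by
          rcases htsT.2 with h1 | ⟨j, hjne, h1⟩
          · linarith
          · exact ⟨j, hjne, le_antisymm h1 (hgge j hjne)⟩
        set μ : Fin (nn+1) → ℝ :=
          fun k => if k = k₀ then (A ts)⁻¹ else g k ts / A ts with hμdef
        set y : Fin (nn+1) → Fin m → ℝ :=
          fun k => if k = k₀ then γ.extend ts else u k with hy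
        have hμnonneg : ∀ k, 0 ≤ μ k := by
          intro k
          by_cases hk : k = k₀
          · simp [hμdef, hk, inv_nonneg, hAge]
          · simp only [hμdef, if_neg hk]
            exact div_nonneg (hgge k hk) hAge
        have hμj : μ j = 0 := by
          simp only [hμdef, if_neg hjne, hgj0, zero_div]
        have hvy : ∀ k, (⟨stmt7F m p (y k), stmt7F_mem m p (y k)⟩ : stmt7W m p)
            = if k = k₀ then Fv (γ.extend ts) else v k := by
          intro k
          by_cases hk : k = k₀ <;> simp [hy, hk, hFv, hv]
        -- the representation identity in W
        have hWrep : (∑ k, v k : stmt7W m p)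
            = ∑ k, μ k • (⟨stmt7F m p (y k), stmt7F_mem m p (y k)⟩ : stmt7W m p) := by
          rw [Module.Basis.ext_elem_iff B]
          intro l
          rw [map_sum, map_sum]
          rw [Finset.sum_apply', Finset.sum_apply']
          have hlhs : ∑ k, B.repr (v k) l = 1 := by
            have : ∀ k, B.repr (v k) l = if k = l then 1 else 0 := fun k => hrepr_v k l
            rw [Finset.sum_congr rfl (fun k _ => this k)]
            simp
          rw [hlhs]
          have hterm : ∀ k, (B.repr (μ k • (⟨stmt7F m p (y k), stmt7F_mem m p (y k)⟩ :
              stmt7W m p))) l = μ k * (B.repr (if k = k₀ then Fv (γ.extend ts) else v k)) l := by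
            intro k
            rw [map_smul, hvy k]
            rfl
          rw [Finset.sum_congr rfl (fun k _ => hterm k)]
          rw [← Finset.add_sum_erase _ _ (Finset.mem_univ k₀)]
          rw [if_pos rfl]
          have herase : ∑ k ∈ univ.erase k₀,
              μ k * (B.repr (if k = k₀ then Fv (γ.extend ts) else v k)) l
              = ∑ k ∈ univ.erase k₀, (if k = l then μ k else 0) := by
            refine Finset.sum_congr rfl fun k hk => ?_
            have hk' : k ≠ k₀ := (Finset.mem_erase.mp hk).1
            rw [if_neg hk', hrepr_v k l]
            by_cases hkl : k = l <;> simp [hkl]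
          rw [herase, Finset.sum_ite_eq' (univ.erase k₀) l μ]
          have hμk₀ : μ k₀ = (A ts)⁻¹ := if_pos rfl
          by_cases hl : l = k₀
          · rw [hl, if_neg (by simp : k₀ ∉ univ.erase k₀), add_zero]
            have h2 : (B.repr (Fv (γ.extend ts))) k₀ = A ts := rfl
            rw [hμk₀, h2, inv_mul_cancel₀ (ne_of_gt hA0)]
          · rw [if_pos (Finset.mem_erase.mpr ⟨hl, Finset.mem_univ l⟩)]
            have h2 : (B.repr (Fv (γ.extend ts))) l = a ts l := rfl
            have h3 : μ l = (A ts - a ts l) / A ts := by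
              simp only [hμdef]
              rw [if_neg hl]
            rw [hμk₀, h2, h3]
            field_simp
            ring
        -- convert to a pointwise identity
        have hrep2 : ∀ x, q x = ∑ k, μ k * stmt7F m p (y k) x := by
          intro x
          have happ := congrArg (fun z : stmt7W m p => (z : (Fin m → ℝ) → ℝ) x) hWrep
          simp only [AddSubmonoidClass.coe_finset_sum, Finset.sum_apply,
            SetLike.val_smul, Pi.smul_apply, smul_eq_mul] at happ
          rw [hu x]
          exact happ
        refine ⟨fun k => (μ k ^ ((p:ℝ)⁻¹)) • y k, ⟨j, ?_⟩,
          stmt7_scale m p hp0 q μ hμnonneg y hrep2⟩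
        show (μ j ^ ((p:ℝ)⁻¹)) • y j = 0
        rw [hμj, Real.zero_rpow (by positivity : ((p:ℝ)⁻¹) ≠ 0), zero_smul]
    · -- dependent case: standard Carathéodory reduction
      obtain ⟨c0, hc0sum, i0, hi0⟩ := Fintype.not_linearIndependent_iff.mp hdep
      obtain ⟨c, hcsum, i1, hi1⟩ : ∃ c : Fin (nn+1) → ℝ,
          ∑ k, c k • v k = 0 ∧ ∃ i, 0 < c i := by
        rcases lt_or_gt_of_ne hi0 with h | h
        · refine ⟨fun k => (-1 : ℝ) * c0 k, ?_, i0, by show (0:ℝ) < -1 * c0 i0; nlinarith⟩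
          show ∑ k : Fin (nn+1), ((-1 : ℝ) * c0 k) • v k = 0
          have h1 : ∀ k : Fin (nn+1), ((-1 : ℝ) * c0 k) • v k = (-1 : ℝ) • (c0 k • v k) :=
            fun k => mul_smul _ _ _
          rw [Finset.sum_congr rfl fun k _ => h1 k, ← Finset.smul_sum, hc0sum, smul_zero]
        · exact ⟨c0, hc0sum, i0, h⟩
      obtain ⟨j, -, hjmax⟩ := Finset.exists_max_image univ c ⟨i1, Finset.mem_univ i1⟩
      have hcj : 0 < c j := lt_of_lt_of_le hi1 (hjmax i1 (Finset.mem_univ i1))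
      set μ : Fin (nn+1) → ℝ := fun k => 1 - c k / c j with hμdef
      have hμnonneg : ∀ k, 0 ≤ μ k := by
        intro k
        have h1 : c k / c j ≤ 1 := (div_le_one hcj).mpr (hjmax k (Finset.mem_univ k))
        simp only [hμdef]
        linarith
      have hμj : μ j = 0 := by simp [hμdef, div_self (ne_of_gt hcj)]
      have hzero : ∀ x, ∑ k, c k * stmt7F m p (u k) x = 0 := by
        intro x
        have happ := congrArg (fun z : stmt7W m p => (z : (Fin m → ℝ) → ℝ) x) hcsum
        simpa only [AddSubmonoidClass.coe_finset_sum, Finset.sum_apply,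
          SetLike.val_smul, Pi.smul_apply, smul_eq_mul, ZeroMemClass.coe_zero,
          Pi.zero_apply] using happ
      have hrep2 : ∀ x, q x = ∑ k, μ k * stmt7F m p (u k) x := by
        intro x
        have h1 : ∑ k, μ k * stmt7F m p (u k) x
            = ∑ k, stmt7F m p (u k) x - (c j)⁻¹ * ∑ k, c k * stmt7F m p (u k) x := by
          rw [Finset.mul_sum, ← Finset.sum_sub_distrib]
          refine Finset.sum_congr rfl fun k _ => ?_
          simp only [hμdef]
          field_simp
        rw [h1, hzero x, mul_zero, sub_zero]
        exact hu x
      refine ⟨fun k => (μ k ^ ((p:ℝ)⁻¹)) • u k, ⟨j, ?_⟩,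
        stmt7_scale m p hp0 q μ hμnonneg u hrep2⟩
      show (μ j ^ ((p:ℝ)⁻¹)) • u j = 0
      rw [hμj, Real.zero_rpow (by positivity : ((p:ℝ)⁻¹) ≠ 0), zero_smul]

end Stmt7Aux

/-- Main theorem. -/
theorem stmt7 (m p N : ℕ) (hm : 2 ≤ m) (hp : Even p) (hp0 : 0 < p)
    (hN : IsLeast {n : ℕ | ∃ u : Fin n → Fin m → ℝ,
      ∀ x : Fin m → ℝ,
        ∑ k, (∑ i, u k i * x i) ^ p = (∑ i, x i ^ 2) ^ (p / 2)} N) :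
    N ≤ Nat.choose (m + p - 1) p - 1 := by
  obtain ⟨⟨u, hu⟩, hlb⟩ := hN
  set q : (Fin m → ℝ) → ℝ := fun x => (∑ i, x i ^ 2) ^ (p / 2) with hq
  have hrep : ∀ x, q x = ∑ k, stmt7F m p (u k) x := fun x => (hu x).symm
  obtain ⟨n', hn', u', hu'⟩ := stmt7_reduce m p hm hp hp0 q N ⟨u, hrep⟩
  exact le_trans (hlb ⟨u', fun x => (hu' x).symm⟩) hn'
end

section
/- Let u_1,...,u_n ∈ ℝ^m (m ≥ 2, p even) satisfy ∑_{k=1}^n ⟨u_k,x⟩^p = ⟨x,x⟩^{p/2} for all x, and suppose a_1,...,a_n : ℝ^m → ℝ are continuous functions of (λ_1,...,λ_m) such that (∑_{i=1}^m λ_i x_i²)^{p/2} = ∑_{k=1}^n a_k(λ) ⟨u_k,x⟩^p for all x ∈ ℝ^m and all λ in the closed positive cone, with a_k(λ) ≥ 0 whenever all λ_i ≥ 0. If additionally ⟨u_k, e_1⟩ ≠ 0 for every k, then setting λ_1 = 0 and λ_2,...,λ_m > 0 forces a_k(0,λ_2,...,λ_m) = 0 for all k, contradicting the identity at x with x_2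 ≠ 0; hence no such family (a_k) with all a_k(λ) ≥ 0 on the closed cone exists. -/
/-- If `(u k)` is a frame with `⟨u k, e₁⟩ ≠ 0` for all `k`, then there is no family
of continuous coefficient functions `a k`, nonnegative on the closed positive cone,
with `(∑ λ_i x_i²)^(p/2) = ∑ a k (λ) ⟨u k, x⟩^p` there. -/
theorem stmt9 (m n p : ℕ) (hm : 2 ≤ m) (hp : Even p) (hp0 : 0 < p)
    (u : Fin n → Fin m → ℝ)
    (hframe : ∀ x : Fin m → ℝ,
      ∑ k, (∑ i, u k i * x i) ^ p = (∑ i, x i ^ 2) ^ (p / 2))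
    (he : ∀ k, u k ⟨0, by omega⟩ ≠ 0) :
    ¬ ∃ a : Fin n → (Fin m → ℝ) → ℝ,
        (∀ k, Continuous (a k)) ∧
        (∀ lam : Fin m → ℝ, (∀ i, 0 ≤ lam i) → ∀ k, 0 ≤ a k lam) ∧
        (∀ lam : Fin m → ℝ, (∀ i, 0 ≤ lam i) → ∀ x : Fin m → ℝ,
          (∑ i, lam i * x i ^ 2) ^ (p / 2) = ∑ k, a k lam * (∑ i, u k i * x i) ^ p) := by
  rintro ⟨a, _hcont, hnn, hid⟩
  have i0 : Fin m := ⟨0, by omega⟩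
  set lam : Fin m → ℝ := fun i => if i = (⟨1, by omega⟩ : Fin m) then 1 else 0 with hlamdef
  have hlam : ∀ i, 0 ≤ lam i := fun i => by dsimp [lam]; split <;> norm_num
  set e1 : Fin m → ℝ := fun i => if i = (⟨0, by omega⟩ : Fin m) then 1 else 0 with he1
  set e2 : Fin m → ℝ := fun i => if i = (⟨1, by omega⟩ : Fin m) then 1 else 0 with he2
  have hp2 : p / 2 ≠ 0 := by obtain ⟨r, hr⟩ := hp; omega
  have hin1 : ∀ k, (∑ i, u k i * e1 i) = u k ⟨0, by omega⟩ := by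
    intro k
    rw [Finset.sum_eq_single (⟨0, by omega⟩ : Fin m)]
    · simp [e1]
    · intro i _ hi; simp [e1, hi]
    · intro h; exact absurd (Finset.mem_univ _) h
  have h1 := hid lam hlam e1
  have L0 : ∑ i, lam i * e1 i ^ 2 = 0 := by
    apply Finset.sum_eq_zero
    intro i _
    by_cases h : i = (⟨1, by omega⟩ : Fin m)
    · have : e1 i = 0 := by simp [e1, h, Fin.ext_iff]
      simp [this]
    · simp [lam, h]
  rw [L0, zero_pow hp2] at h1
  simp only [hin1] at h1
  have hz : ∀ k, a k lam = 0 := by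
    intro k
    have hnonneg : ∀ j ∈ Finset.univ, 0 ≤ a j lam * u j ⟨0, by omega⟩ ^ p :=
      fun j _ => mul_nonneg (hnn lam hlam j) (hp.pow_nonneg _)
    have := (Finset.sum_eq_zero_iff_of_nonneg hnonneg).mp h1.symm k (Finset.mem_univ k)
    have hpos : 0 < u k ⟨0, by omega⟩ ^ p := hp.pow_pos (he k)
    rcases mul_eq_zero.mp this with h | h
    · exact h
    · exact absurd h (ne_of_gt hpos)
  have h2 := hid lam hlam e2
  have L1 : ∑ i, lam i * e2 i ^ 2 = 1 := by
    rw [Finset.sum_eq_single (⟨1, by omega⟩ : Fin m)]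
    · simp [lam, e2]
    · intro i _ hi; simp [lam, hi]
    · intro h; exact absurd (Finset.mem_univ _) h
  rw [L1, one_pow] at h2
  simp only [hz, zero_mul, Finset.sum_const_zero] at h2
  exact one_ne_zero h2
end
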